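/- arXiv:2203.13473 — 2 statements merged into one kernel-verified Lean document; each statement's English description precedes it below -/
import Mathlib

section
/- Let d = 3 or d = 4, and define Z := ((d-2)/2)(1+|x|²/(d(d-2)))^{-d/2} - (|x|²/(2d))[(1+|x|²/(d(d-2)))^{-d/2} - (|x|²/(d(d-2)))^{-d/2}]. Then Z ∈ L^{2d/(d+2)}(ℝ^d), i.e., ‖Z‖_{L^{2d/(d+2)}} < ∞. -/
open MeasureTheory Metric Set
open scoped ENNReal

private lemma aux_rpow_sub {a : ℝ} (ha : 1 ≤ a) {u : ℝ} (hu : 0 < u) :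
    u ^ (-a) - (1 + u) ^ (-a) ≤ a * u ^ (-a - 1) := by
  have h1u : (0:ℝ) < 1 + u := by linarith
  have key : 1 - a / (1 + u) ≤ (u / (1 + u)) ^ a := by
    have hb := one_add_mul_self_le_rpow_one_add (s := -(1/(1+u)))
      (by rw [neg_le, neg_neg]; rw [div_le_one h1u]; linarith) ha
    have h1 : 1 + -(1/(1+u)) = u/(1+u) := by field_simp; ring
    rw [h1] at hb
    calc 1 - a / (1+u) = 1 + a * -(1/(1+u)) := by ring
      _ ≤ (u/(1+u)) ^ a := hb
  have h2 : (u/(1+u)) ^ a = u ^ a * (1+u) ^ (-a) := by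
    rw [Real.div_rpow hu.le h1u.le, Real.rpow_neg h1u.le, div_eq_mul_inv]
  have h3 : u ^ (-a) * (u ^ a * (1+u) ^ (-a)) = (1+u) ^ (-a) := by
    rw [← mul_assoc, ← Real.rpow_add hu, neg_add_cancel, Real.rpow_zero, one_mul]
  have hup : (0:ℝ) < u ^ (-a) := Real.rpow_pos_of_pos hu _
  calc u ^ (-a) - (1 + u) ^ (-a) = u ^ (-a) * (1 - (u/(1+u)) ^ a) := by
        rw [h2, mul_sub, mul_one, h3]
    _ ≤ u ^ (-a) * (a / (1+u)) := by
        have : 1 - (u/(1+u)) ^ a ≤ a / (1+u) := by linarith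
        exact mul_le_mul_of_nonneg_left this hup.le
    _ ≤ u ^ (-a) * (a / u) := by
        have hdiv : a/(1+u) ≤ a/u := by
          rw [div_le_div_iff₀ h1u hu]; nlinarith
        exact mul_le_mul_of_nonneg_left hdiv hup.le
    _ = a * u ^ (-a - 1) := by
        rw [sub_eq_add_neg, Real.rpow_add hu, Real.rpow_neg_one]
        field_simp

private lemma aux_lintegral_ball (d : ℕ) (hd : 0 < d) {s : ℝ} (hs0 : 0 < s) (hsd : s < d) :
    ∫⁻ x : EuclideanSpace ℝ (Fin d) in ball 0 1, ENNReal.ofReal (‖x‖ ^ (-s)) < ∞ := by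
  haveI : Nonempty (Fin d) := ⟨⟨0, hd⟩⟩
  set E := EuclideanSpace ℝ (Fin d)
  set μ := (volume : Measure E).restrict (ball 0 1) with hμ
  have h_meas : AEMeasurable (fun x : E => ‖x‖ ^ (-s)) μ := by fun_prop
  rw [lintegral_eq_lintegral_meas_le μ
    (Filter.Eventually.of_forall fun x => Real.rpow_nonneg (norm_nonneg _) _) h_meas]
  have hβ : (-s)⁻¹ * d < -1 := by
    rw [← neg_inv, neg_mul, neg_lt_neg_iff]
    rw [lt_inv_mul_iff₀ hs0]
    simpa using hsd
  calc ∫⁻ t in Ioi 0, μ {a : E | t ≤ ‖a‖ ^ (-s)}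
      ≤ ∫⁻ t in Ioc 0 1 ∪ Ioi 1, μ {a : E | t ≤ ‖a‖ ^ (-s)} :=
        lintegral_mono_set Ioi_subset_Ioc_union_Ioi
    _ ≤ (∫⁻ t in Ioc 0 1, μ {a : E | t ≤ ‖a‖ ^ (-s)}) +
        ∫⁻ t in Ioi 1, μ {a : E | t ≤ ‖a‖ ^ (-s)} := lintegral_union_le _ _ _
    _ < ∞ := by
      refine ENNReal.add_lt_top.2 ⟨?_, ?_⟩
      · calc (∫⁻ t in Ioc 0 1, μ {a : E | t ≤ ‖a‖ ^ (-s)})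
            ≤ ∫⁻ _t in Ioc 0 1, volume (ball (0:E) 1) := by
              refine setLIntegral_mono' measurableSet_Ioc fun t _ => ?_
              refine le_trans (measure_mono (subset_univ _)) ?_
              rw [hμ, Measure.restrict_apply_univ]
          _ = volume (ball (0:E) 1) * volume (Ioc (0:ℝ) 1) := setLIntegral_const _ _
          _ < ∞ := ENNReal.mul_lt_top measure_ball_lt_top (by simp)
      · have hsub : ∀ t ∈ Ioi (1:ℝ), μ {a : E | t ≤ ‖a‖ ^ (-s)} ≤
            ENNReal.ofReal (t ^ ((-s)⁻¹ * d)) * volume (ball (0:E) 1) := by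
          intro t ht
          have ht1 : (1:ℝ) < t := ht
          have ht0 : (0:ℝ) < t := by linarith
          have hrad : (0:ℝ) ≤ t ^ (-s)⁻¹ := (Real.rpow_pos_of_pos ht0 _).le
          have hss : {a : E | t ≤ ‖a‖ ^ (-s)} ⊆ closedBall 0 (t ^ (-s)⁻¹) := by
            intro a hamem
            simp only [mem_setOf_eq] at hamem
            rcases eq_or_ne a 0 with rfl | ha
            · exfalso
              rw [norm_zero, Real.zero_rpow (by simpa using hs0.ne')] at hamem
              linarith
            · have hna : 0 < ‖a‖ := norm_pos_iff.2 ha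
              rw [mem_closedBall_zero_iff]
              exact (Real.le_rpow_inv_iff_of_neg hna ht0 (by linarith)).2 hamem
          calc μ {a : E | t ≤ ‖a‖ ^ (-s)} ≤ volume (closedBall (0:E) (t ^ (-s)⁻¹)) := by
                rw [hμ, Measure.restrict_apply' measurableSet_ball]
                exact measure_mono (inter_subset_left.trans hss)
            _ = ENNReal.ofReal ((t ^ (-s)⁻¹) ^ (Module.finrank ℝ E)) * volume (ball (0:E) 1) :=
                Measure.addHaar_closedBall _ _ hrad
            _ = ENNReal.ofReal (t ^ ((-s)⁻¹ * d)) * volume (ball (0:E) 1) := by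
                rw [← Real.rpow_natCast (t ^ (-s)⁻¹) _, ← Real.rpow_mul ht0.le,
                  finrank_euclideanSpace, Fintype.card_fin]
        calc (∫⁻ t in Ioi 1, μ {a : E | t ≤ ‖a‖ ^ (-s)})
            ≤ ∫⁻ t in Ioi 1, ENNReal.ofReal (t ^ ((-s)⁻¹ * d)) * volume (ball (0:E) 1) :=
              setLIntegral_mono' measurableSet_Ioi hsub
          _ = (∫⁻ t in Ioi 1, ENNReal.ofReal (t ^ ((-s)⁻¹ * d))) * volume (ball (0:E) 1) :=
              lintegral_mul_const' _ _ measure_ball_lt_top.ne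
          _ < ∞ := ENNReal.mul_lt_top
              ((integrableOn_Ioi_rpow_of_lt hβ one_pos).setLIntegral_lt_top)
              measure_ball_lt_top

set_option maxHeartbeats 2000000 in
private lemma main_aux (d : ℕ) (hd3 : 3 ≤ d) (hd5 : d ≤ 5)
    (Z : EuclideanSpace ℝ (Fin d) → ℝ)
    (hZ : ∀ x, Z x =
      (((d : ℝ) - 2) / 2) * (1 + ‖x‖ ^ 2 / ((d : ℝ) * ((d : ℝ) - 2))) ^ (-(d : ℝ) / 2) -
        (‖x‖ ^ 2 / (2 * (d : ℝ))) *
          ((1 + ‖x‖ ^ 2 / ((d : ℝ) * ((d : ℝ) - 2))) ^ (-(d : ℝ) / 2) -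
            (‖x‖ ^ 2 / ((d : ℝ) * ((d : ℝ) - 2))) ^ (-(d : ℝ) / 2))) :
    MemLp Z (ENNReal.ofReal (2 * (d : ℝ) / ((d : ℝ) + 2))) volume := by
  haveI : Nonempty (Fin d) := ⟨⟨0, by omega⟩⟩
  have hdR : (3:ℝ) ≤ (d:ℝ) := by exact_mod_cast hd3
  have hdR5 : (d:ℝ) ≤ 5 := by exact_mod_cast hd5
  have hd0 : (0:ℝ) < d := by linarith
  set c : ℝ := (d:ℝ) * ((d:ℝ) - 2) with hcdef
  have hc : (0:ℝ) < c := by rw [hcdef]; nlinarith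
  set q : ℝ := 2 * (d:ℝ) / ((d:ℝ) + 2) with hqdef
  have hq1 : 1 < q := by rw [hqdef, lt_div_iff₀ (by linarith)]; linarith
  have hq0 : 0 < q := by linarith
  set a : ℝ := (d:ℝ)/2 with hadef
  have hna : -(d:ℝ)/2 = -a := by rw [hadef]; ring
  have ha1 : 1 ≤ a := by rw [hadef]; linarith
  have hca : 0 < c ^ a := Real.rpow_pos_of_pos hc _
  have hca1 : 0 < c ^ (a+1) := Real.rpow_pos_of_pos hc _
  set K : ℝ := ((d:ℝ)-2)/2 + c ^ a / (2*(d:ℝ)) with hKdef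
  set L : ℝ := (((d:ℝ)-2)/2) * c ^ a + a * c ^ (a+1) / (2*(d:ℝ)) with hLdef
  have hd2 : (0:ℝ) ≤ ((d:ℝ)-2)/2 := by linarith
  have hK0 : 0 ≤ K := by
    rw [hKdef]
    have : 0 < c ^ a / (2*(d:ℝ)) := div_pos hca (by linarith)
    linarith
  have hL0 : 0 ≤ L := by
    rw [hLdef]
    have h1 : 0 ≤ (((d:ℝ)-2)/2) * c ^ a := mul_nonneg hd2 hca.le
    have h2 : 0 < a * c ^ (a+1) / (2*(d:ℝ)) := by
      apply div_pos (mul_pos (by linarith) hca1) (by linarith)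
    linarith
  -- rpow algebra helper
  have hpow : ∀ r : ℝ, 0 < r → ∀ e : ℝ, (r^2/c) ^ e = c ^ (-e) * r ^ (2*e) := by
    intro r hr e
    rw [Real.div_rpow (by positivity) hc.le, ← Real.rpow_natCast r 2,
      ← Real.rpow_mul hr.le, Real.rpow_neg hc.le, div_eq_mul_inv, mul_comm]
    norm_num
  -- pointwise bounds
  have bound_in : ∀ x : EuclideanSpace ℝ (Fin d), x ≠ 0 → ‖x‖ ≤ 1 →
      |Z x| ≤ K * ‖x‖ ^ ((2:ℝ) - d) := by
    intro x hx hx1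
    set r : ℝ := ‖x‖ with hrdef
    have hr : 0 < r := by rw [hrdef]; exact norm_pos_iff.2 hx
    set u : ℝ := r^2/c with hudef
    have hu : 0 < u := by rw [hudef]; positivity
    have hA0 : 0 ≤ (1+u) ^ (-(d:ℝ)/2) := Real.rpow_nonneg (by linarith) _
    have hA1 : (1+u) ^ (-(d:ℝ)/2) ≤ 1 :=
      Real.rpow_le_one_of_one_le_of_nonpos (by linarith) (by linarith)
    have hB : u ^ (-(d:ℝ)/2) = c ^ a * r ^ (-(d:ℝ)) := by
      rw [hudef, hpow r hr]
      have e1 : -(-(d:ℝ)/2) = a := by rw [hadef]; ring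
      have e2 : 2 * (-(d:ℝ)/2) = -(d:ℝ) := by ring
      rw [e1, e2]
    have hAB : (1+u) ^ (-(d:ℝ)/2) ≤ u ^ (-(d:ℝ)/2) := by
      rw [hna, Real.rpow_neg hu.le, Real.rpow_neg (by linarith)]
      exact inv_anti₀ (Real.rpow_pos_of_pos hu _)
        (Real.rpow_le_rpow hu.le (by linarith) (by positivity))
    have hZx : Z x = (((d:ℝ)-2)/2) * (1+u) ^ (-(d:ℝ)/2) +
        (r^2/(2*(d:ℝ))) * (u ^ (-(d:ℝ)/2) - (1+u) ^ (-(d:ℝ)/2)) := by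
      rw [hZ x, ← hrdef, ← hudef]; ring
    have hZnn : 0 ≤ Z x := by
      rw [hZx]
      have h1 : 0 ≤ (((d:ℝ)-2)/2) * (1+u) ^ (-(d:ℝ)/2) :=
        mul_nonneg (by linarith) hA0
      have h2 : 0 ≤ (r^2/(2*(d:ℝ))) * (u ^ (-(d:ℝ)/2) - (1+u) ^ (-(d:ℝ)/2)) :=
        mul_nonneg (by positivity) (by linarith)
      linarith
    have hr2 : r^2 * r^(-(d:ℝ)) = r^((2:ℝ) - (d:ℝ)) := by
      rw [← Real.rpow_natCast r 2, ← Real.rpow_add hr]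
      congr 1
      try push_cast
      try ring
    have h1le : (1:ℝ) ≤ r ^ ((2:ℝ) - d) :=
      Real.one_le_rpow_of_pos_of_le_one_of_nonpos hr hx1 (by linarith)
    have hrp : 0 < r ^ (-(d:ℝ)) := Real.rpow_pos_of_pos hr _
    rw [abs_of_nonneg hZnn, hZx, hB]
    have hm : 0 ≤ r^2/(2*(d:ℝ)) := by positivity
    calc (((d:ℝ)-2)/2) * (1+u) ^ (-(d:ℝ)/2) +
          (r^2/(2*(d:ℝ))) * (c ^ a * r ^ (-(d:ℝ)) - (1+u) ^ (-(d:ℝ)/2))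
        ≤ ((d:ℝ)-2)/2 + (r^2/(2*(d:ℝ))) * (c ^ a * r ^ (-(d:ℝ))) := by
          have t1 : (((d:ℝ)-2)/2) * (1+u) ^ (-(d:ℝ)/2) ≤ ((d:ℝ)-2)/2 :=
            (mul_le_mul_of_nonneg_left hA1 hd2).trans_eq (mul_one _)
          have t2 : (r^2/(2*(d:ℝ))) * (c ^ a * r ^ (-(d:ℝ)) - (1+u) ^ (-(d:ℝ)/2)) ≤
              (r^2/(2*(d:ℝ))) * (c ^ a * r ^ (-(d:ℝ))) := by
            apply mul_le_mul_of_nonneg_left _ hm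
            linarith
          linarith
      _ = ((d:ℝ)-2)/2 + c ^ a / (2*(d:ℝ)) * r ^ ((2:ℝ) - d) := by
          rw [← hr2]; ring
      _ ≤ K * r ^ ((2:ℝ) - d) := by
          rw [hKdef, add_mul]
          have h5 : ((d:ℝ)-2)/2 * 1 ≤ ((d:ℝ)-2)/2 * r ^ ((2:ℝ)-(d:ℝ)) :=
            mul_le_mul_of_nonneg_left h1le hd2
          rw [mul_one] at h5
          linarith
  have bound_out : ∀ x : EuclideanSpace ℝ (Fin d), x ≠ 0 →
      |Z x| ≤ L * ‖x‖ ^ (-(d:ℝ)) := by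
    intro x hx
    set r : ℝ := ‖x‖ with hrdef
    have hr : 0 < r := by rw [hrdef]; exact norm_pos_iff.2 hx
    set u : ℝ := r^2/c with hudef
    have hu : 0 < u := by rw [hudef]; positivity
    have hA0 : 0 ≤ (1+u) ^ (-(d:ℝ)/2) := Real.rpow_nonneg (by linarith) _
    have hB : u ^ (-(d:ℝ)/2) = c ^ a * r ^ (-(d:ℝ)) := by
      rw [hudef, hpow r hr]
      have e1 : -(-(d:ℝ)/2) = a := by rw [hadef]; ring
      have e2 : 2 * (-(d:ℝ)/2) = -(d:ℝ) := by ring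
      rw [e1, e2]
    have hC : u ^ (-a - 1) = c ^ (a+1) * r ^ (-(d:ℝ) - 2) := by
      rw [hudef, hpow r hr]
      have e1 : -(-a - 1) = a + 1 := by ring
      have e2 : 2 * (-a - 1) = -(d:ℝ) - 2 := by rw [hadef]; ring
      rw [e1, e2]
    have hAB : (1+u) ^ (-(d:ℝ)/2) ≤ u ^ (-(d:ℝ)/2) := by
      rw [hna, Real.rpow_neg hu.le, Real.rpow_neg (by linarith)]
      exact inv_anti₀ (Real.rpow_pos_of_pos hu _)
        (Real.rpow_le_rpow hu.le (by linarith) (by positivity))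
    have hdiff : u ^ (-(d:ℝ)/2) - (1+u) ^ (-(d:ℝ)/2) ≤ a * u ^ (-a - 1) := by
      rw [hna]; exact aux_rpow_sub ha1 hu
    have hZx : Z x = (((d:ℝ)-2)/2) * (1+u) ^ (-(d:ℝ)/2) +
        (r^2/(2*(d:ℝ))) * (u ^ (-(d:ℝ)/2) - (1+u) ^ (-(d:ℝ)/2)) := by
      rw [hZ x, ← hrdef, ← hudef]; ring
    have hZnn : 0 ≤ Z x := by
      rw [hZx]
      have h1 : 0 ≤ (((d:ℝ)-2)/2) * (1+u) ^ (-(d:ℝ)/2) :=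
        mul_nonneg (by linarith) hA0
      have h2 : 0 ≤ (r^2/(2*(d:ℝ))) * (u ^ (-(d:ℝ)/2) - (1+u) ^ (-(d:ℝ)/2)) :=
        mul_nonneg (by positivity) (by linarith)
      linarith
    have hr3 : r^2 * r^(-(d:ℝ) - 2) = r^(-(d:ℝ)) := by
      rw [← Real.rpow_natCast r 2, ← Real.rpow_add hr]
      congr 1
      try push_cast
      try ring
    have hm : 0 ≤ r^2/(2*(d:ℝ)) := by positivity
    rw [abs_of_nonneg hZnn, hZx]
    calc (((d:ℝ)-2)/2) * (1+u) ^ (-(d:ℝ)/2) +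
          (r^2/(2*(d:ℝ))) * (u ^ (-(d:ℝ)/2) - (1+u) ^ (-(d:ℝ)/2))
        ≤ (((d:ℝ)-2)/2) * (c ^ a * r ^ (-(d:ℝ))) +
          (r^2/(2*(d:ℝ))) * (a * (c ^ (a+1) * r ^ (-(d:ℝ) - 2))) := by
          have t1 : (((d:ℝ)-2)/2) * (1+u) ^ (-(d:ℝ)/2) ≤
              (((d:ℝ)-2)/2) * (c ^ a * r ^ (-(d:ℝ))) := by
            rw [← hB]
            exact mul_le_mul_of_nonneg_left hAB (by linarith)
          have t2 : (r^2/(2*(d:ℝ))) * (u ^ (-(d:ℝ)/2) - (1+u) ^ (-(d:ℝ)/2)) ≤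
              (r^2/(2*(d:ℝ))) * (a * (c ^ (a+1) * r ^ (-(d:ℝ) - 2))) := by
            apply mul_le_mul_of_nonneg_left _ hm
            rw [← hC]
            exact hdiff
          linarith
      _ = L * r ^ (-(d:ℝ)) := by
          rw [hLdef, ← hr3]; ring
  -- measurability
  have hZmeas : Measurable Z := by
    rw [funext hZ]; fun_prop
  refine ⟨hZmeas.aestronglyMeasurable, ?_⟩
  have hp0 : (ENNReal.ofReal q) ≠ 0 := by
    simp only [ne_eq, ENNReal.ofReal_eq_zero, not_le]; exact hq0
  rw [eLpNorm_lt_top_iff_lintegral_rpow_enorm_lt_top hp0 ENNReal.ofReal_ne_top,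
    ENNReal.toReal_ofReal hq0.le]
  simp only [enorm_eq_nnnorm]
  set s : ℝ := ((d:ℝ) - 2) * q with hsdef
  have hs0 : 0 < s := by rw [hsdef]; exact mul_pos (by linarith) hq0
  have hsd : s < (d:ℝ) := by
    rw [hsdef, hqdef, ← mul_div_assoc, div_lt_iff₀ (by linarith)]
    nlinarith
  set t : ℝ := (d:ℝ) * q with htdef
  have htd : (d:ℝ) < t := by rw [htdef]; nlinarith
  have ht0 : 0 < t := by linarith
  have h0 : ∀ᵐ x ∂(volume : Measure (EuclideanSpace ℝ (Fin d))), x ≠ 0 := by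
    refine ae_iff.2 ?_
    have hset : {x : EuclideanSpace ℝ (Fin d) | ¬ x ≠ 0} = {0} := by ext y; simp
    rw [hset]
    exact measure_singleton 0
  rw [← lintegral_add_compl (fun x => (‖Z x‖₊ : ℝ≥0∞) ^ q)
    (measurableSet_ball (x := (0:EuclideanSpace ℝ (Fin d))) (ε := 1))]
  refine ENNReal.add_lt_top.2 ⟨?_, ?_⟩
  · -- ball piece
    have hae : ∀ᵐ x ∂(volume.restrict (ball (0:EuclideanSpace ℝ (Fin d)) 1)),
        (‖Z x‖₊ : ℝ≥0∞) ^ q ≤ ENNReal.ofReal (K ^ q) * ENNReal.ofReal (‖x‖ ^ (-s)) := by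
      filter_upwards [ae_restrict_of_ae h0, ae_restrict_mem measurableSet_ball] with x hx0 hxb
      have hxle : ‖x‖ ≤ 1 := (mem_ball_zero_iff.1 hxb).le
      have hb := bound_in x hx0 hxle
      have hrw : (‖Z x‖₊ : ℝ≥0∞) = ENNReal.ofReal |Z x| := by
        rw [← Real.norm_eq_abs, ofReal_norm_eq_enorm, enorm_eq_nnnorm]
      rw [hrw]
      calc ENNReal.ofReal |Z x| ^ q ≤ ENNReal.ofReal (K * ‖x‖ ^ ((2:ℝ) - d)) ^ q :=
            ENNReal.rpow_le_rpow (ENNReal.ofReal_le_ofReal hb) hq0.le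
        _ = ENNReal.ofReal ((K * ‖x‖ ^ ((2:ℝ) - d)) ^ q) :=
            ENNReal.ofReal_rpow_of_nonneg
              (mul_nonneg hK0 (Real.rpow_nonneg (norm_nonneg _) _)) hq0.le
        _ = ENNReal.ofReal (K ^ q) * ENNReal.ofReal (‖x‖ ^ (-s)) := by
            rw [Real.mul_rpow hK0 (Real.rpow_nonneg (norm_nonneg _) _),
              ← Real.rpow_mul (norm_nonneg x)]
            have he : ((2:ℝ) - d) * q = -s := by rw [hsdef]; ring
            rw [he, ENNReal.ofReal_mul (Real.rpow_nonneg hK0 _)]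
    calc ∫⁻ x in ball (0:EuclideanSpace ℝ (Fin d)) 1, (‖Z x‖₊ : ℝ≥0∞) ^ q
        ≤ ∫⁻ x in ball (0:EuclideanSpace ℝ (Fin d)) 1,
            ENNReal.ofReal (K ^ q) * ENNReal.ofReal (‖x‖ ^ (-s)) := lintegral_mono_ae hae
      _ = ENNReal.ofReal (K ^ q) *
            ∫⁻ x in ball (0:EuclideanSpace ℝ (Fin d)) 1, ENNReal.ofReal (‖x‖ ^ (-s)) :=
          lintegral_const_mul' _ _ ENNReal.ofReal_ne_top
      _ < ∞ := ENNReal.mul_lt_top ENNReal.ofReal_lt_top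
          (aux_lintegral_ball d (by omega) hs0 hsd)
  · -- complement piece
    have hpt : ∀ x ∈ (ball (0:EuclideanSpace ℝ (Fin d)) 1)ᶜ,
        (‖Z x‖₊ : ℝ≥0∞) ^ q ≤
          ENNReal.ofReal (L ^ q * 2 ^ t) * ENNReal.ofReal ((1 + ‖x‖) ^ (-t)) := by
      intro x hxc
      have hx1 : 1 ≤ ‖x‖ := by
        simp only [mem_compl_iff, mem_ball_zero_iff, not_lt] at hxc
        exact hxc
      have hx0 : x ≠ 0 := by
        intro h
        rw [h, norm_zero] at hx1
        linarith
      have hxp : (0:ℝ) < ‖x‖ := by linarith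
      have hb := bound_out x hx0
      have h2t : (0:ℝ) < 2 ^ t := Real.rpow_pos_of_pos (by norm_num) _
      have hxt : (0:ℝ) < ‖x‖ ^ t := Real.rpow_pos_of_pos hxp _
      have h1xt : (0:ℝ) < (1 + ‖x‖) ^ t := Real.rpow_pos_of_pos (by linarith) _
      have key2 : ‖x‖ ^ (-t) ≤ 2 ^ t * (1 + ‖x‖) ^ (-t) := by
        have e1 : (1 + ‖x‖) ^ t ≤ 2 ^ t * ‖x‖ ^ t := by
          rw [← Real.mul_rpow (by norm_num) (norm_nonneg x)]
          exact Real.rpow_le_rpow (by linarith) (by linarith) ht0.le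
        rw [Real.rpow_neg hxp.le, Real.rpow_neg (by linarith : (0:ℝ) ≤ 1 + ‖x‖)]
        have h3 : ((1 + ‖x‖) ^ t) * (‖x‖ ^ t)⁻¹ ≤ 2 ^ t := by
          rw [← div_eq_mul_inv, div_le_iff₀ hxt]
          linarith
        calc (‖x‖ ^ t)⁻¹ = ((1 + ‖x‖) ^ t * (‖x‖ ^ t)⁻¹) * ((1 + ‖x‖) ^ t)⁻¹ := by
              field_simp
          _ ≤ 2 ^ t * ((1 + ‖x‖) ^ t)⁻¹ := mul_le_mul_of_nonneg_right h3 (by positivity)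
      have hrw : (‖Z x‖₊ : ℝ≥0∞) = ENNReal.ofReal |Z x| := by
        rw [← Real.norm_eq_abs, ofReal_norm_eq_enorm, enorm_eq_nnnorm]
      rw [hrw]
      calc ENNReal.ofReal |Z x| ^ q ≤ ENNReal.ofReal (L * ‖x‖ ^ (-(d:ℝ))) ^ q :=
            ENNReal.rpow_le_rpow (ENNReal.ofReal_le_ofReal hb) hq0.le
        _ = ENNReal.ofReal ((L * ‖x‖ ^ (-(d:ℝ))) ^ q) :=
            ENNReal.ofReal_rpow_of_nonneg
              (mul_nonneg hL0 (Real.rpow_nonneg (norm_nonneg _) _)) hq0.le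
        _ = ENNReal.ofReal (L ^ q * ‖x‖ ^ (-t)) := by
            rw [Real.mul_rpow hL0 (Real.rpow_nonneg (norm_nonneg _) _),
              ← Real.rpow_mul (norm_nonneg x)]
            have he : -(d:ℝ) * q = -t := by rw [htdef]; ring
            rw [he]
        _ ≤ ENNReal.ofReal (L ^ q * (2 ^ t * (1 + ‖x‖) ^ (-t))) :=
            ENNReal.ofReal_le_ofReal
              (mul_le_mul_of_nonneg_left key2 (Real.rpow_nonneg hL0 _))
        _ = ENNReal.ofReal (L ^ q * 2 ^ t) * ENNReal.ofReal ((1 + ‖x‖) ^ (-t)) := by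
            rw [← mul_assoc, ENNReal.ofReal_mul (mul_nonneg (Real.rpow_nonneg hL0 _) h2t.le)]
    have hfr : ((Module.finrank ℝ (EuclideanSpace ℝ (Fin d))):ℝ) < t := by
      rw [finrank_euclideanSpace, Fintype.card_fin]; exact htd
    calc ∫⁻ x in (ball (0:EuclideanSpace ℝ (Fin d)) 1)ᶜ, (‖Z x‖₊ : ℝ≥0∞) ^ q
        ≤ ∫⁻ x in (ball (0:EuclideanSpace ℝ (Fin d)) 1)ᶜ,
            ENNReal.ofReal (L ^ q * 2 ^ t) * ENNReal.ofReal ((1 + ‖x‖) ^ (-t)) :=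
          setLIntegral_mono' measurableSet_ball.compl hpt
      _ ≤ ∫⁻ x, ENNReal.ofReal (L ^ q * 2 ^ t) * ENNReal.ofReal ((1 + ‖x‖) ^ (-t)) :=
          lintegral_mono' Measure.restrict_le_self le_rfl
      _ = ENNReal.ofReal (L ^ q * 2 ^ t) * ∫⁻ x, ENNReal.ofReal ((1 + ‖x‖) ^ (-t)) :=
          lintegral_const_mul' _ _ ENNReal.ofReal_ne_top
      _ < ∞ := ENNReal.mul_lt_top ENNReal.ofReal_lt_top (finite_integral_one_add_norm hfr)


open MeasureTheory
open scoped ENNReal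

/-- For `d = 3, 4`, the regular part `Z` of the decomposition
`ΛW = -({d(d-2)}^{d/2}/(2d))|x|^{-(d-2)} + Z` belongs to `L^{2d/(d+2)}(ℝ^d)`. -/
theorem regular_part_memLp (d : ℕ) (hd : d = 3 ∨ d = 4)
    (Z : EuclideanSpace ℝ (Fin d) → ℝ)
    (hZ : ∀ x, Z x =
      (((d : ℝ) - 2) / 2) * (1 + ‖x‖ ^ 2 / ((d : ℝ) * ((d : ℝ) - 2))) ^ (-(d : ℝ) / 2) -
        (‖x‖ ^ 2 / (2 * (d : ℝ))) *
          ((1 + ‖x‖ ^ 2 / ((d : ℝ) * ((d : ℝ) - 2))) ^ (-(d : ℝ) / 2) -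
            (‖x‖ ^ 2 / ((d : ℝ) * ((d : ℝ) - 2))) ^ (-(d : ℝ) / 2))) :
    MemLp Z (ENNReal.ofReal (2 * (d : ℝ) / ((d : ℝ) + 2))) volume := by
  rcases hd with rfl | rfl
  · exact main_aux 3 (by norm_num) (by norm_num) Z hZ
  · exact main_aux 4 (by norm_num) (by norm_num) Z hZ
end

section
/- Let H be a real Hilbert space, S : H → ℝ a C² functional, Φ ∈ H with S'(Φ) = 0, and N(u) := S'(u)u the Nehari functional (assumed C¹). Suppose Φ minimizes S over {u ≠ 0 : N(u) = 0}, that N'(Φ)Φ < 0, and let B(u,v) := [S''(Φ)u]v. Then for every f ∈ H with N'(Φ)f = 0 one has B(f,f) ≥ 0. -/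
/-- Abstract nonnegativity of the second variation on the Nehari manifold:
if `Φ` is a critical point of a `C²` functional `S` on a real Hilbert space which
minimizes `S` over the Nehari manifold `{u ≠ 0 : N(u) = 0}` (where `N(u) = S'(u)u`),
and `N'(Φ)Φ < 0`, then `B(f,f) = [S''(Φ)f]f ≥ 0` for every `f` with `N'(Φ)f = 0`. -/
theorem second_variation_nonneg_on_nehari
    {H : Type*} [NormedAddCommGroup H] [InnerProductSpace ℝ H] [CompleteSpace H]
    (S : H → ℝ) (hS : ContDiff ℝ 2 S)
    (N : H → ℝ) (hN : ∀ u, N u = fderiv ℝ S u u)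
    (Φ : H) (hΦne : Φ ≠ 0)
    (hΦNehari : N Φ = 0)
    (hcrit : fderiv ℝ S Φ = 0)
    (hmin : ∀ u : H, u ≠ 0 → N u = 0 → S Φ ≤ S u)
    (hNdiff : Differentiable ℝ N)
    (hneg : fderiv ℝ N Φ Φ < 0) :
    ∀ f : H, fderiv ℝ N Φ f = 0 → (0 : ℝ) ≤ fderiv ℝ (fderiv ℝ S) Φ f f := by
  intro f hf
  by_contra hlt
  push_neg at hlt
  set Bff : ℝ := fderiv ℝ (fderiv ℝ S) Φ f f with hBff
  -- Basic smoothness facts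
  have hS' : ContDiff ℝ 1 (fderiv ℝ S) := hS.fderiv_right (m := 1) (by norm_num)
  have hSdiff : Differentiable ℝ S := hS.differentiable (by norm_num)
  set D : H →L[ℝ] ℝ := fderiv ℝ N Φ with hD
  set c : ℝ := D Φ with hc
  have hcne : c ≠ 0 := ne_of_lt hneg
  -- the nonlinear maps
  set m : ℝ × ℝ → H := fun p => (1 + p.2) • (Φ + p.1 • f) with hm_def
  have hm0 : m (0, 0) = Φ := by simp [hm_def]
  have hmC : ContDiff ℝ 1 m :=
    (contDiff_const.add contDiff_snd).smul
      (contDiff_const.add (contDiff_fst.smul contDiff_const))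
  set F : ℝ × ℝ → ℝ × ℝ := fun p => (p.1, N (m p)) with hF_def
  have hN1 : ContDiff ℝ 1 N := by
    have h1 : ContDiff ℝ 1 fun u : H => fderiv ℝ S u u := hS'.clm_apply contDiff_id
    have : N = fun u : H => fderiv ℝ S u u := funext hN
    rw [this]; exact h1
  have hFC : ContDiff ℝ 1 F := contDiff_fst.prodMk (hN1.comp hmC)
  have hF00 : F (0, 0) = (0, 0) := by
    show ((0 : ℝ), N (m (0, 0))) = ((0 : ℝ), (0 : ℝ))
    rw [hm0, hΦNehari]
  -- the derivative of F at (0,0), as a continuous linear equivalence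
  set A : (ℝ × ℝ) →L[ℝ] (ℝ × ℝ) :=
    (ContinuousLinearMap.fst ℝ ℝ ℝ).prod (c • ContinuousLinearMap.snd ℝ ℝ ℝ) with hA
  set A' : (ℝ × ℝ) →L[ℝ] (ℝ × ℝ) :=
    (ContinuousLinearMap.fst ℝ ℝ ℝ).prod (c⁻¹ • ContinuousLinearMap.snd ℝ ℝ ℝ) with hA'
  have hAA' : Function.LeftInverse A' A := by
    intro p
    simp only [hA, hA', ContinuousLinearMap.prod_apply, ContinuousLinearMap.coe_fst',
      ContinuousLinearMap.coe_smul', Pi.smul_apply, ContinuousLinearMap.coe_snd',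
      smul_eq_mul]
    rw [← mul_assoc, inv_mul_cancel₀ hcne, one_mul]
  have hA'A : Function.RightInverse A' A := by
    intro p
    simp only [hA, hA', ContinuousLinearMap.prod_apply, ContinuousLinearMap.coe_fst',
      ContinuousLinearMap.coe_smul', Pi.smul_apply, ContinuousLinearMap.coe_snd',
      smul_eq_mul]
    rw [← mul_assoc, mul_inv_cancel₀ hcne, one_mul]
  set e : (ℝ × ℝ) ≃L[ℝ] (ℝ × ℝ) := ContinuousLinearEquiv.equivOfInverse A A' hAA' hA'A with he
  have he_apply : ∀ p : ℝ × ℝ, e p = (p.1, c * p.2) := by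
    intro p; simp [he, hA]
  have he_symm10 : e.symm ((1 : ℝ), (0 : ℝ)) = (1, 0) := by
    rw [ContinuousLinearEquiv.symm_apply_eq, he_apply]
    simp
  -- F has derivative e at (0,0)
  have hm' : HasFDerivAt m
      ((1 + (0 : ℝ)) • ((ContinuousLinearMap.fst ℝ ℝ ℝ).smulRight f) +
        (ContinuousLinearMap.snd ℝ ℝ ℝ).smulRight (Φ + (0 : ℝ) • f)) (0, 0) := by
    have hc' : HasFDerivAt (fun p : ℝ × ℝ => 1 + p.2) (ContinuousLinearMap.snd ℝ ℝ ℝ) (0, 0) :=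
      (hasFDerivAt_snd).const_add 1
    have hv : HasFDerivAt (fun p : ℝ × ℝ => Φ + p.1 • f)
        ((ContinuousLinearMap.fst ℝ ℝ ℝ).smulRight f) (0, 0) :=
      ((hasFDerivAt_fst).smul_const f).const_add Φ
    exact hc'.smul hv
  have hNΦ : HasFDerivAt N D (m (0, 0)) := by
    rw [hm0]; exact (hNdiff Φ).hasFDerivAt
  have hF'' : HasFDerivAt F (e : (ℝ × ℝ) →L[ℝ] (ℝ × ℝ)) (0, 0) := by
    have hG := hNΦ.comp (0, 0) hm'
    have hFd : HasFDerivAt F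
        ((ContinuousLinearMap.fst ℝ ℝ ℝ).prod (D.comp _)) (0, 0) :=
      HasFDerivAt.prodMk hasFDerivAt_fst hG
    convert hFd using 1
    apply ContinuousLinearMap.ext
    intro p
    have : D (p.1 • f) = 0 := by rw [map_smul, hf, smul_zero]
    simp [he_apply, ContinuousLinearMap.comp_apply, map_add, map_smul, this,
      smul_eq_mul, mul_comm, hc]
  have hFs : HasStrictFDerivAt F (e : (ℝ × ℝ) →L[ℝ] (ℝ × ℝ)) (0, 0) :=
    hFC.contDiffAt.hasStrictFDerivAt' hF'' one_ne_zero
  -- local inverse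
  set ψ : ℝ × ℝ → ℝ × ℝ := hFC.contDiffAt.localInverse hF'' one_ne_zero with hψdef
  have hψeq : ψ = hFs.localInverse F e (0, 0) := rfl
  have hψ00 : ψ (0, 0) = (0, 0) := by
    have := hFs.localInverse_apply_image
    rw [hF00] at this
    rw [hψeq]; exact this
  have hψC : ContDiffAt ℝ 1 ψ (0, 0) := by
    have := hFC.contDiffAt.to_localInverse (hf' := hF'') (hn := one_ne_zero)
    rwa [hF00] at this
  have hψs : HasStrictFDerivAt ψ (e.symm : (ℝ × ℝ) →L[ℝ] (ℝ × ℝ)) (0, 0) := by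
    have := hFs.to_localInverse
    rw [hF00] at this
    rw [hψeq]; exact this
  -- the implicit function h and the curve u
  set h : ℝ → ℝ := fun a => (ψ (a, 0)).2 with hhdef
  have hh0 : h 0 = 0 := by
    show (ψ (0, 0)).2 = 0
    rw [hψ00]
  set u : ℝ → H := fun a => (1 + h a) • (Φ + a • f) with hudef
  have hu0 : u 0 = Φ := by simp [hudef, hh0]
  -- eventually, the curve lies on the Nehari manifold
  have hten : Filter.Tendsto (fun a : ℝ => (a, (0 : ℝ))) (nhds 0) (nhds ((0 : ℝ), (0 : ℝ))) := by
    have : Continuous (fun a : ℝ => (a, (0 : ℝ))) := continuous_id.prodMk continuous_const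
    simpa using this.tendsto 0
  have hri : ∀ᶠ a in nhds (0 : ℝ), F (ψ (a, 0)) = (a, 0) := by
    have h1 := hFs.eventually_right_inverse
    rw [hF00] at h1
    exact hten.eventually h1
  have hNu : ∀ᶠ a in nhds (0 : ℝ), N (u a) = 0 := by
    filter_upwards [hri] with a ha
    have h1 : (ψ (a, 0)).1 = a := congrArg Prod.fst ha
    have h2 : N (m (ψ (a, 0))) = 0 := congrArg Prod.snd ha
    rw [hm_def] at h2
    simp only [h1] at h2
    exact h2
  -- h is continuously differentiable near 0
  have hhC : ContDiffAt ℝ 1 h 0 := by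
    have h1 : ContDiffAt ℝ 1 (fun a : ℝ => ((a, (0 : ℝ)) : ℝ × ℝ)) 0 :=
      (contDiff_id.prodMk contDiff_const).contDiffAt
    have h2 : ContDiffAt ℝ 1 (fun a : ℝ => ψ (a, 0)) 0 :=
      ContDiffAt.comp (g := ψ) (f := fun a : ℝ => ((a, (0 : ℝ)) : ℝ × ℝ)) 0 hψC h1
    exact (contDiff_snd.contDiffAt).comp 0 h2
  obtain ⟨s, hs, hhs⟩ := hhC.contDiffOn le_rfl (by simp)
  have hdiff : ∀ᶠ a in nhds (0 : ℝ), DifferentiableAt ℝ h a := by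
    obtain ⟨t, hts, hto, h0t⟩ := mem_nhds_iff.mp hs
    filter_upwards [hto.mem_nhds h0t] with a ha
    exact (hhs.differentiableOn one_ne_zero).differentiableAt
      (mem_nhds_iff.mpr ⟨t, hts, hto, ha⟩)
  -- h'(0) = 0
  have hh'0 : HasDerivAt h 0 0 := by
    have hcurve : HasDerivAt (fun a : ℝ => ((a, (0 : ℝ)) : ℝ × ℝ)) ((1 : ℝ), (0 : ℝ)) 0 :=
      HasDerivAt.prodMk (hasDerivAt_id 0) (hasDerivAt_const 0 0)
    have h1 : HasDerivAt (fun a : ℝ => ψ (a, 0)) (e.symm (1, 0)) 0 :=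
      HasFDerivAt.comp_hasDerivAt (f := fun a : ℝ => ((a, (0 : ℝ)) : ℝ × ℝ)) 0
        hψs.hasFDerivAt hcurve
    rw [he_symm10] at h1
    have h2 := (ContinuousLinearMap.snd ℝ ℝ ℝ).hasFDerivAt.comp_hasDerivAt 0 h1
    exact h2.congr_deriv (by simp)
  -- u'(0) = f
  have hu0' : HasDerivAt u f 0 := by
    have hcpart : HasDerivAt (fun a : ℝ => 1 + h a) 0 0 := hh'0.const_add 1
    have hvpart : HasDerivAt (fun a : ℝ => Φ + a • f) f 0 := by
      have := ((hasDerivAt_id (0 : ℝ)).smul_const f).const_add Φ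
      simpa using this
    have := hcpart.smul hvpart
    simp only [hh0, add_zero, one_smul, zero_smul, smul_zero] at this
    exact this
  -- the derivative of a ↦ S'(u a) f at 0 is Bff
  have hfd : HasDerivAt (fun a => fderiv ℝ S (u a) f) Bff 0 := by
    have hD2 : HasFDerivAt (fderiv ℝ S) (fderiv ℝ (fderiv ℝ S) Φ) (u 0) := by
      rw [hu0]; exact (hS'.differentiable one_ne_zero Φ).hasFDerivAt
    have h1 : HasDerivAt (fun a => fderiv ℝ S (u a)) (fderiv ℝ (fderiv ℝ S) Φ f) 0 :=
      hD2.comp_hasDerivAt 0 hu0'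
    have h2 := h1.clm_apply (hasDerivAt_const 0 f)
    simpa [hBff] using h2
  -- the function g = φ' along the curve
  set g : ℝ → ℝ := fun a => (1 + h a) * fderiv ℝ S (u a) f with hgdef
  have hg0 : HasDerivAt g Bff 0 := by
    have hcpart : HasDerivAt (fun a : ℝ => 1 + h a) 0 0 := hh'0.const_add 1
    have := hcpart.mul hfd
    exact this.congr_deriv (by simp [hh0])
  have hgval0 : g 0 = 0 := by simp [hgdef, hu0, hcrit]
  -- eventual positivity facts
  have hhcont : ContinuousAt h 0 := hhC.continuousAt
  have hhsmall : ∀ᶠ a in nhds (0 : ℝ), 0 < 1 + h a := by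
    have : ∀ᶠ a in nhds (0 : ℝ), h a ∈ Set.Ioo (-1 : ℝ) 1 := by
      apply hhcont.eventually_mem
      rw [hh0]
      exact isOpen_Ioo.mem_nhds (by norm_num)
    filter_upwards [this] with a ha
    linarith [ha.1]
  have hwne : ∀ᶠ a in nhds (0 : ℝ), Φ + a • f ≠ 0 := by
    have hcont : ContinuousAt (fun a : ℝ => Φ + a • f) 0 :=
      (continuous_const.add (continuous_id.smul continuous_const)).continuousAt
    have : (fun a : ℝ => Φ + a • f) 0 ≠ 0 := by simpa using hΦne
    exact hcont.eventually_ne this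
  -- eventually φ has derivative g a at a
  have hφderiv : ∀ᶠ a in nhds (0 : ℝ), HasDerivAt (fun x => S (u x)) (g a) a := by
    filter_upwards [hdiff, hNu, hhsmall] with a hda hNa hpos
    have hha : HasDerivAt h (deriv h a) a := hda.hasDerivAt
    have hcpart : HasDerivAt (fun x : ℝ => 1 + h x) (deriv h a) a := hha.const_add 1
    have hvpart : HasDerivAt (fun x : ℝ => Φ + x • f) f a := by
      have := ((hasDerivAt_id (a : ℝ)).smul_const f).const_add Φ
      simpa using this
    have huda : HasDerivAt u ((1 + h a) • f + deriv h a • (Φ + a • f)) a := by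
      have := hcpart.smul hvpart
      exact this
    have hSc : HasDerivAt (fun x => S (u x))
        (fderiv ℝ S (u a) ((1 + h a) • f + deriv h a • (Φ + a • f))) a :=
      (hSdiff (u a)).hasFDerivAt.comp_hasDerivAt a huda
    have hker : fderiv ℝ S (u a) (Φ + a • f) = 0 := by
      have h1 : fderiv ℝ S (u a) (u a) = 0 := by rw [← hN (u a)]; exact hNa
      have h2 : (1 + h a) • fderiv ℝ S (u a) (Φ + a • f) = 0 := by
        rw [← map_smul]
        rw [hudef] at h1 ⊢
        exact h1
      have := smul_eq_zero.mp h2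
      rcases this with h3 | h3
      · exact absurd h3 (ne_of_gt hpos)
      · exact h3
    have : fderiv ℝ S (u a) ((1 + h a) • f + deriv h a • (Φ + a • f)) = g a := by
      rw [map_add, map_smul, map_smul, hker, smul_zero, add_zero, hgdef, smul_eq_mul]
    rw [this] at hSc
    exact hSc
  -- slope of g is eventually negative on the right
  have hslope : Filter.Tendsto (slope g 0) (nhdsWithin 0 {(0 : ℝ)}ᶜ) (nhds Bff) :=
    hasDerivAt_iff_tendsto_slope.mp hg0
  have hslneg : ∀ᶠ a in nhdsWithin (0 : ℝ) {(0 : ℝ)}ᶜ, slope g 0 a < 0 :=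
    hslope.eventually (gt_mem_nhds hlt)
  have hgneg : ∀ᶠ a in nhdsWithin (0 : ℝ) (Set.Ioi 0), g a < 0 := by
    have hle : nhdsWithin (0 : ℝ) (Set.Ioi 0) ≤ nhdsWithin 0 {(0 : ℝ)}ᶜ :=
      nhdsWithin_mono 0 (fun x hx => ne_of_gt hx)
    filter_upwards [hle hslneg, self_mem_nhdsWithin] with a ha hapos
    have hane : (a : ℝ) ≠ 0 := ne_of_gt hapos
    have : slope g 0 a = g a / a := by
      rw [slope_def_field, hgval0, sub_zero, sub_zero]
    rw [this] at ha
    have := mul_neg_of_neg_of_pos ha hapos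
    rwa [div_mul_cancel₀ _ hane] at this
  -- put it all together
  have hall : ∀ᶠ a in nhds (0 : ℝ),
      N (u a) = 0 ∧ HasDerivAt (fun x => S (u x)) (g a) a ∧ 0 < 1 + h a ∧ Φ + a • f ≠ 0 := by
    filter_upwards [hNu, hφderiv, hhsmall, hwne] with a h1 h2 h3 h4
    exact ⟨h1, h2, h3, h4⟩
  obtain ⟨ε, hε, hball⟩ := Metric.eventually_nhds_iff.mp hall
  obtain ⟨ε', hε', hball'⟩ := Metric.mem_nhdsWithin_iff.mp hgneg
  set δ : ℝ := min ε ε' / 2 with hδdef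
  have hδpos : 0 < δ := by positivity
  have hδε : δ < ε := by
    have : min ε ε' ≤ ε := min_le_left _ _
    simp only [hδdef]; linarith
  have hδε' : δ < ε' := by
    have : min ε ε' ≤ ε' := min_le_right _ _
    simp only [hδdef]; linarith
  have hIcc : ∀ a ∈ Set.Icc (0 : ℝ) δ,
      N (u a) = 0 ∧ HasDerivAt (fun x => S (u x)) (g a) a ∧ 0 < 1 + h a ∧ Φ + a • f ≠ 0 := by
    intro a ha
    apply hball
    rw [Real.dist_eq, sub_zero, abs_of_nonneg ha.1]
    linarith [ha.2]
  set φ : ℝ → ℝ := fun x => S (u x) with hφdef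
  have hanti : StrictAntiOn φ (Set.Icc 0 δ) := by
    apply strictAntiOn_of_deriv_neg (convex_Icc 0 δ)
    · intro a ha
      exact ((hIcc a ha).2.1).continuousAt.continuousWithinAt
    · intro x hx
      rw [interior_Icc] at hx
      have hder := (hIcc x ⟨le_of_lt hx.1, le_of_lt hx.2⟩).2.1
      rw [hder.deriv]
      apply hball'
      refine ⟨Metric.mem_ball.mpr ?_, hx.1⟩
      rw [Real.dist_eq, sub_zero, abs_of_nonneg (le_of_lt hx.1)]
      linarith [hx.2]
  have hlt2 : φ δ < φ 0 :=
    hanti (Set.left_mem_Icc.mpr (le_of_lt hδpos)) (Set.right_mem_Icc.mpr (le_of_lt hδpos)) hδpos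
  have hδfacts := hIcc δ (Set.right_mem_Icc.mpr (le_of_lt hδpos))
  have huδne : u δ ≠ 0 := smul_ne_zero (ne_of_gt hδfacts.2.2.1) hδfacts.2.2.2
  have hge : S Φ ≤ S (u δ) := hmin (u δ) huδne hδfacts.1
  have hφ0 : φ 0 = S Φ := by rw [hφdef]; simp only [hu0]
  rw [hφ0] at hlt2
  exact absurd hge (not_le.mpr hlt2)
end
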